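/- For holomorphic functions f, g on the upper half-plane, real weights k, l, a nonnegative integer ν, and any γ in SL₂(ℤ), the ν-th Rankin–Cohen bracket satisfies the cocycle property [f|_k γ, g|_l γ]_ν = [f, g]_ν |_{k+l+2ν} γ. -/

import Mathlib

open Complex MeasureTheory Finset

local notation "SL2Z" => Matrix.SpecialLinearGroup (Fin 2) ℤ

/-- The upper half-plane, as a subset of `ℂ`. -/
def UpperHalf : Set ℂ := {z | 0 < z.im}

/-- The Möbius action of `γ ∈ SL₂(ℤ)` on a point of the upper half-plane. -/
noncomputable def moebius (γ : SL2Z) (z : ℂ) : ℂ :=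
  ((γ 0 0 : ℂ) * z + (γ 0 1 : ℂ)) / ((γ 1 0 : ℂ) * z + (γ 1 1 : ℂ))

/-- The automorphy factor `cz + d`. -/
def denom (γ : SL2Z) (z : ℂ) : ℂ := (γ 1 0 : ℂ) * z + (γ 1 1 : ℂ)

/-- The weight-`k` slash action (real weight, via complex powers):
`(f ∣ₖ γ)(z) = (cz+d)^{-k} f(γz)`. -/
noncomputable def slash (k : ℝ) (γ : SL2Z) (f : ℂ → ℂ) : ℂ → ℂ :=
  fun z => denom γ z ^ (-(k : ℂ)) * f (moebius γ z)

/-- The normalized derivative `D = (1/(2πi)) d/dz`. -/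
noncomputable def Dop (f : ℂ → ℂ) : ℂ → ℂ :=
  fun z => (1 / (2 * (Real.pi : ℂ) * Complex.I)) * deriv f z

/-- Iterated normalized derivative `D^r`. -/
noncomputable def DIter (r : ℕ) (f : ℂ → ℂ) : ℂ → ℂ := Dop^[r] f

/-- The ν-th Rankin–Cohen bracket of `f` and `g`, of weights `k` and `l`:
`[f,g]_ν = Σ_{r=0}^{ν} (-1)^{ν-r} C(ν,r) Γ(k+ν)Γ(l+ν)/(Γ(k+r)Γ(l+ν-r)) D^r f · D^{ν-r} g`. -/
noncomputable def RC (k l : ℝ) (ν : ℕ) (f g : ℂ → ℂ) : ℂ → ℂ := fun z =>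
  ∑ r ∈ Finset.range (ν + 1),
    ((-1 : ℂ) ^ (ν - r) * (Nat.choose ν r : ℂ) *
        ((Real.Gamma (k + ν) * Real.Gamma (l + ν) /
          (Real.Gamma (k + r) * Real.Gamma (l + (ν - r : ℕ))) : ℝ) : ℂ)) *
      DIter r f z * DIter (ν - r) g z

/-- The coefficient `α(k,l,ν,n,m)` appearing in the Dirichlet series `L_{f,g,ν,n}`. -/
noncomputable def alphaRC (k l : ℝ) (ν : ℕ) (n m : ℕ) : ℝ :=
  ∑ r ∈ Finset.range (ν + 1),
    (-1 : ℝ) ^ (ν - r) * (Nat.choose ν r : ℝ) *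
      (Real.Gamma (k + ν) * Real.Gamma (l + ν) /
        (Real.Gamma (k + r) * Real.Gamma (l + (ν - r : ℕ)))) *
      (n : ℝ) ^ r * (m : ℝ) ^ (ν - r)

/-- A holomorphic modular form of integral weight `k`, character `χ` (a function of the
lower-right entry `d`), on the subgroup `Γ ≤ SL₂(ℤ)`; functions on `ℂ`, conditions on `ℍ`. -/
structure IsModularFormC (Γ : Subgroup SL2Z) (k : ℤ) (χ : ℤ → ℂ) (f : ℂ → ℂ) : Prop where
  holo : DifferentiableOn ℂ f UpperHalf
  transform : ∀ γ ∈ Γ, ∀ z ∈ UpperHalf,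
    f (moebius γ z) = χ (γ 1 1) * denom γ z ^ k * f z
  bounded : ∀ γ : SL2Z, ∃ M A : ℝ, ∀ z ∈ UpperHalf, A ≤ z.im →
    ‖f (moebius γ z)‖ ≤ M * ‖denom γ z‖ ^ (k : ℝ)

/-- A cusp form of integral weight `k`, character `χ`, on `Γ ≤ SL₂(ℤ)`. -/
structure IsCuspFormC (Γ : Subgroup SL2Z) (k : ℤ) (χ : ℤ → ℂ) (f : ℂ → ℂ) : Prop where
  holo : DifferentiableOn ℂ f UpperHalf
  transform : ∀ γ ∈ Γ, ∀ z ∈ UpperHalf,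
    f (moebius γ z) = χ (γ 1 1) * denom γ z ^ k * f z
  vanish : ∀ γ : SL2Z, ∀ ε > (0 : ℝ), ∃ A : ℝ, ∀ z ∈ UpperHalf, A ≤ z.im →
    ‖f (moebius γ z)‖ ≤ ε * ‖denom γ z‖ ^ (k : ℝ)

/-- The Jacobi theta function `θ(z) = Σ_{n ∈ ℤ} e^{2πin²z}`. -/
noncomputable def jacobiThetaFn (z : ℂ) : ℂ :=
  ∑' n : ℤ, Complex.exp (2 * Real.pi * Complex.I * (n : ℂ) ^ 2 * z)

/-- The theta automorphy factor `j(γ,z) = θ(γz)/θ(z)`; for `γ ∈ Γ₀(4)` it equals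
`(c/d)ε_d^{-1}(cz+d)^{1/2}`, so that `j(γ,z)^{2k+1}` is the weight `k+1/2` automorphy factor
with the theta multiplier. -/
noncomputable def jTheta (γ : SL2Z) (z : ℂ) : ℂ :=
  jacobiThetaFn (moebius γ z) / jacobiThetaFn z

/-- A holomorphic modular form of half-integral weight `k + 1/2` with character `χ`
on `Γ₀(4)` (in Shimura's sense, with the theta multiplier). -/
structure IsModularFormHalf (k : ℕ) (χ : ℤ → ℂ) (f : ℂ → ℂ) : Prop where
  holo : DifferentiableOn ℂ f UpperHalf
  transform : ∀ γ ∈ CongruenceSubgroup.Gamma0 4, ∀ z ∈ UpperHalf,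
    f (moebius γ z) = χ (γ 1 1) * jTheta γ z ^ (2 * k + 1) * f z
  bounded : ∀ γ : SL2Z, ∃ M A : ℝ, ∀ z ∈ UpperHalf, A ≤ z.im →
    ‖f (moebius γ z)‖ ≤ M * ‖denom γ z‖ ^ ((k : ℝ) + 1 / 2)

/-- A cusp form of half-integral weight `k + 1/2` with character `χ` on `Γ₀(4)`. -/
structure IsCuspFormHalf (k : ℕ) (χ : ℤ → ℂ) (f : ℂ → ℂ) : Prop where
  holo : DifferentiableOn ℂ f UpperHalf
  transform : ∀ γ ∈ CongruenceSubgroup.Gamma0 4, ∀ z ∈ UpperHalf,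
    f (moebius γ z) = χ (γ 1 1) * jTheta γ z ^ (2 * k + 1) * f z
  vanish : ∀ γ : SL2Z, ∀ ε > (0 : ℝ), ∃ A : ℝ, ∀ z ∈ UpperHalf, A ≤ z.im →
    ‖f (moebius γ z)‖ ≤ ε * ‖denom γ z‖ ^ ((k : ℝ) + 1 / 2)

/-- A measurable fundamental domain `𝒟 ⊆ ℍ` for the action of `Γ` on the upper half-plane. -/
structure IsFundDomain (Γ : Subgroup SL2Z) (𝒟 : Set ℂ) : Prop where
  subset : 𝒟 ⊆ UpperHalf
  meas : MeasurableSet 𝒟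
  covers : ∀ z ∈ UpperHalf, ∃ γ ∈ Γ, moebius γ z ∈ 𝒟
  ae_disjoint : ∀ γ ∈ Γ, (γ : Matrix (Fin 2) (Fin 2) ℤ) ≠ 1 →
    (γ : Matrix (Fin 2) (Fin 2) ℤ) ≠ -1 →
    volume {z | z ∈ 𝒟 ∧ moebius γ z ∈ 𝒟} = 0

/-- The Petersson inner product `⟨f,g⟩ = ∫_𝒟 f(z) conj(g(z)) y^k dxdy/y²` of weight `k`,
computed on a fundamental domain `𝒟`. -/
noncomputable def petersson (k : ℝ) (𝒟 : Set ℂ) (f g : ℂ → ℂ) : ℂ :=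
  ∫ z in 𝒟, f z * (starRingEnd ℂ) (g z) * (((z.im ^ k / z.im ^ 2 : ℝ)) : ℂ)

/-- `R` is a complete set of representatives for the cosets `Γ_∞\Γ`, where
`Γ_∞ = {± [[1,t],[0,1]] : t ∈ ℤ}` is the subgroup of elements with lower-left entry `0`. -/
def IsCosetReps (Γ : Subgroup SL2Z) (R : Set SL2Z) : Prop :=
  (∀ δ ∈ R, δ ∈ Γ) ∧ ∀ γ ∈ Γ, ∃! δ, δ ∈ R ∧ ∃ τ : SL2Z, τ 1 0 = 0 ∧ γ = τ * δ
namespace RCaux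

lemma isOpen_UH : IsOpen UpperHalf := by
  have : UpperHalf = Complex.im ⁻¹' Set.Ioi 0 := rfl
  rw [this]; exact Complex.continuous_im.isOpen_preimage _ isOpen_Ioi

lemma mem_UH {z : ℂ} : z ∈ UpperHalf ↔ 0 < z.im := Iff.rfl

lemma det_re (γ : SL2Z) :
    ((γ 0 0 : ℤ) : ℝ) * ((γ 1 1 : ℤ) : ℝ) - ((γ 0 1 : ℤ) : ℝ) * ((γ 1 0 : ℤ) : ℝ) = 1 := by
  have h := γ.prop
  rw [Matrix.det_fin_two] at h
  exact_mod_cast congrArg (fun n : ℤ => (n : ℝ)) h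

lemma det_coe (γ : SL2Z) :
    ((γ 0 0 : ℂ)) * (γ 1 1 : ℂ) - (γ 0 1 : ℂ) * (γ 1 0 : ℂ) = 1 := by
  have h := γ.prop
  rw [Matrix.det_fin_two] at h
  exact_mod_cast congrArg (fun n : ℤ => (n : ℂ)) h

lemma denom_im (γ : SL2Z) (z : ℂ) : (denom γ z).im = ((γ 1 0 : ℤ) : ℝ) * z.im := by
  simp [denom, Complex.add_im, Complex.mul_im]

lemma denom_ne_zero (γ : SL2Z) {z : ℂ} (hz : z ∈ UpperHalf) : denom γ z ≠ 0 := by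
  have hzi : 0 < z.im := hz
  by_cases hc : ((γ 1 0 : ℤ) : ℝ) = 0
  · have hc' : (γ 1 0 : ℂ) = 0 := by
      have : (γ 1 0 : ℤ) = 0 := by exact_mod_cast hc
      simp [this]
    have hd : (γ 1 1 : ℂ) ≠ 0 := by
      intro h0
      have := det_coe γ
      rw [hc', h0] at this
      simp at this
    simpa [denom, hc'] using hd
  · intro h0
    have him : (denom γ z).im = 0 := by rw [h0]; simp
    rw [denom_im] at him
    rcases mul_eq_zero.1 him with h | h
    · exact hc h
    · linarith

lemma moebius_im (γ : SL2Z) {z : ℂ} (hz : z ∈ UpperHalf) :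
    (moebius γ z).im = z.im / Complex.normSq (denom γ z) := by
  rw [moebius, Complex.div_im]
  have h2 := det_re γ
  rw [show ((γ 1 0 : ℂ) * z + (γ 1 1 : ℂ)) = denom γ z from rfl]
  rw [div_sub_div_same]
  congr 1
  simp only [denom, Complex.add_im, Complex.add_re, Complex.mul_im, Complex.mul_re,
    Complex.intCast_re, Complex.intCast_im]
  ring_nf
  linear_combination z.im * h2

lemma moebius_mem (γ : SL2Z) {z : ℂ} (hz : z ∈ UpperHalf) : moebius γ z ∈ UpperHalf := by
  have hd := denom_ne_zero γ hz
  rw [mem_UH, moebius_im γ hz]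
  exact div_pos hz (Complex.normSq_pos.2 hd)

end RCaux
namespace RCaux

lemma hasDerivAt_denom (γ : SL2Z) (z : ℂ) : HasDerivAt (denom γ) ((γ 1 0 : ℂ)) z := by
  show HasDerivAt (fun z : ℂ => (γ 1 0 : ℂ) * z + (γ 1 1 : ℂ)) _ z
  simpa using ((hasDerivAt_id z).const_mul ((γ 1 0 : ℂ))).add_const ((γ 1 1 : ℂ))

lemma hasDerivAt_moebius (γ : SL2Z) {z : ℂ} (hz : z ∈ UpperHalf) :
    HasDerivAt (moebius γ) ((denom γ z)⁻¹ ^ 2) z := by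
  have hd := denom_ne_zero γ hz
  have hnum : HasDerivAt (fun z : ℂ => (γ 0 0 : ℂ) * z + (γ 0 1 : ℂ)) ((γ 0 0 : ℂ)) z := by
    simpa using ((hasDerivAt_id z).const_mul ((γ 0 0 : ℂ))).add_const ((γ 0 1 : ℂ))
  have h := hnum.div (hasDerivAt_denom γ z) hd
  refine h.congr_deriv (Eq.symm ?_)
  have h1 : (γ 0 0 : ℂ) * denom γ z - ((γ 0 0 : ℂ) * z + (γ 0 1 : ℂ)) * (γ 1 0 : ℂ) = 1 := by
    rw [denom]; linear_combination det_coe γ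
  rw [h1, inv_pow, one_div]

lemma two_pi_I_ne_zero' : (2 * (Real.pi : ℂ) * Complex.I) ≠ 0 := by
  simp [Real.pi_ne_zero, Complex.I_ne_zero, Complex.ofReal_ne_zero]

lemma hasDerivAt_denom_cpow (γ : SL2Z) (w : ℂ) {z : ℂ} (hz : z ∈ UpperHalf) :
    HasDerivAt (fun z => denom γ z ^ w) (w * denom γ z ^ (w - 1) * (γ 1 0 : ℂ)) z := by
  by_cases hc : (γ 1 0 : ℂ) = 0
  · have heq : (fun z : ℂ => denom γ z ^ w) = fun _ => ((γ 1 1 : ℂ)) ^ w := by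
      funext x; rw [denom, hc, zero_mul, zero_add]
    rw [heq, hc, mul_zero]
    exact hasDerivAt_const z _
  · refine HasDerivAt.cpow_const (hasDerivAt_denom γ z) ?_
    rw [Complex.mem_slitPlane_iff]
    right
    rw [denom_im]
    have hzi : 0 < z.im := hz
    have : ((γ 1 0 : ℤ) : ℝ) ≠ 0 := by
      intro h0; apply hc; exact_mod_cast h0
    positivity

lemma DIter_succ (f : ℂ → ℂ) (n : ℕ) : DIter (n+1) f = Dop (DIter n f) :=
  Function.iterate_succ_apply' Dop n f

lemma analytic_DIter {f : ℂ → ℂ} (hf : DifferentiableOn ℂ f UpperHalf) (s : ℕ) :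
    AnalyticOnNhd ℂ (DIter s f) UpperHalf := by
  induction s with
  | zero => exact hf.analyticOnNhd isOpen_UH
  | succ n ih =>
    rw [DIter_succ]
    have : Dop (DIter n f) = fun z => (1 / (2 * (Real.pi : ℂ) * Complex.I)) * deriv (DIter n f) z := rfl
    rw [this]
    exact analyticOnNhd_const.mul ih.deriv

lemma deriv_DIter_eq {f : ℂ → ℂ} (n : ℕ) (z : ℂ) :
    deriv (DIter n f) z = (2 * (Real.pi : ℂ) * Complex.I) * DIter (n+1) f z := by
  rw [DIter_succ]
  show deriv (DIter n f) z = (2 * (Real.pi : ℂ) * Complex.I) * ((1 / (2 * (Real.pi : ℂ) * Complex.I)) * deriv (DIter n f) z)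
  rw [← mul_assoc, mul_one_div, div_self two_pi_I_ne_zero', one_mul]

end RCaux
namespace RCaux

/-- Ascending product `(K+s)(K+s+1)⋯(K+n-1)`. -/
noncomputable def Pc (K : ℂ) (s n : ℕ) : ℂ := ∏ j ∈ Finset.Ico s n, (K + j)

lemma Pc_self (K : ℂ) (s : ℕ) : Pc K s s = 1 := by simp [Pc]

lemma Pc_bot (K : ℂ) {s n : ℕ} (h : s < n) : Pc K s n = (K + s) * Pc K (s+1) n := by
  rw [Pc, Pc, Finset.prod_eq_prod_Ico_succ_bot h]

lemma Pc_top (K : ℂ) {s n : ℕ} (h : s ≤ n) : Pc K s (n+1) = Pc K s n * (K + n) := by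
  rw [Pc, Pc, Finset.prod_Ico_succ_top h]

lemma Pc_mul (K : ℂ) {s r n : ℕ} (h1 : s ≤ r) (h2 : r ≤ n) :
    Pc K s r * Pc K r n = Pc K s n := by
  rw [Pc, Pc, Pc, Finset.prod_Ico_consecutive _ h1 h2]

lemma gamma_nonzero_imp (k : ℝ) {r : ℕ} (h : Real.Gamma (k + r) ≠ 0) :
    ∀ j : ℕ, r ≤ j → k + j ≠ 0 := by
  intro j hj h0
  apply h
  rw [Real.Gamma_eq_zero_iff]
  exact ⟨j - r, by push_cast [Nat.cast_sub hj]; linarith⟩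

lemma gamma_prod (k : ℝ) {r n : ℕ} (hr : r ≤ n) (h : Real.Gamma (k + r) ≠ 0) :
    Real.Gamma (k + n) = (∏ j ∈ Finset.Ico r n, (k + j)) * Real.Gamma (k + r) := by
  induction n with
  | zero =>
    have : r = 0 := Nat.le_zero.1 hr
    subst this; simp
  | succ m ih =>
    rcases Nat.lt_or_ge r (m+1) with hlt | hge
    · have hrm : r ≤ m := Nat.lt_succ_iff.1 hlt
      have hkm : k + m ≠ 0 := gamma_nonzero_imp k h m hrm
      have h1 : Real.Gamma (k + (m+1 : ℕ)) = (k + m) * Real.Gamma (k + m) := by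
        have := Real.Gamma_add_one hkm
        rw [← this]; congr 1; push_cast; ring
      rw [h1, ih hrm, Finset.prod_Ico_succ_top hrm]
      ring
    · have : r = m + 1 := le_antisymm hr hge
      subst this; simp

lemma gamma_ratio (k : ℝ) {r n : ℕ} (hr : r ≤ n) (h : Real.Gamma (k + n) ≠ 0) :
    Real.Gamma (k + n) / Real.Gamma (k + r) = ∏ j ∈ Finset.Ico r n, (k + j) := by
  by_cases hden : Real.Gamma (k + r) = 0
  · rw [hden, div_zero]
    obtain ⟨m, hm⟩ := (Real.Gamma_eq_zero_iff _).1 hden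
    have hj0 : k + ((r + m : ℕ) : ℝ) = 0 := by push_cast; push_cast at hm; linarith
    have hlt : r + m < n := by
      by_contra hge
      push_neg at hge
      apply h
      rw [Real.Gamma_eq_zero_iff]
      exact ⟨r + m - n, by push_cast [Nat.cast_sub hge]; push_cast at hm; linarith⟩
    symm
    exact Finset.prod_eq_zero (Finset.mem_Ico.2 ⟨Nat.le_add_right r m, hlt⟩) hj0
  · rw [gamma_prod k hr hden, mul_div_assoc, div_self hden, mul_one]

/-- the cast of the Gamma-ratio coefficient to the Pochhammer product -/
lemma coeff_eq (k l : ℝ) {r ν : ℕ} (hr : r ≤ ν)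
    (hk : Real.Gamma (k + ν) ≠ 0) (hl : Real.Gamma (l + ν) ≠ 0) :
    ((Real.Gamma (k + ν) * Real.Gamma (l + ν) /
        (Real.Gamma (k + r) * Real.Gamma (l + (ν - r : ℕ))) : ℝ) : ℂ)
      = Pc (k : ℂ) r ν * Pc (l : ℂ) (ν - r) ν := by
  have hsplit : Real.Gamma (k + ν) * Real.Gamma (l + ν) /
      (Real.Gamma (k + r) * Real.Gamma (l + (ν - r : ℕ)))
      = (Real.Gamma (k + ν) / Real.Gamma (k + r)) *
        (Real.Gamma (l + ν) / Real.Gamma (l + (ν - r : ℕ))) := by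
    rw [div_mul_div_comm]
  rw [hsplit, gamma_ratio k hr hk, gamma_ratio l (Nat.sub_le ν r) hl]
  rw [Pc, Pc]
  push_cast
  ring

end RCaux
namespace RCaux

lemma choose_key (n i : ℕ) (hi : i < n) (k : ℂ) :
    (n.choose (i+1) : ℂ) * (k + n + i + 1) + (n.choose i : ℂ) * (k + i)
      = ((n+1).choose (i+1) : ℂ) * (k + n) := by
  have h1 : (((n+1).choose (i+1) : ℕ) : ℂ) = (n.choose i : ℂ) + (n.choose (i+1) : ℂ) := by
    rw [Nat.choose_succ_succ]; push_cast; ring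
  have h2n : n.choose (i+1) * (i+1) = n.choose i * (n - i) := Nat.choose_succ_right_eq n i
  have h2 : (n.choose (i+1) : ℂ) * ((i : ℂ)+1) = (n.choose i : ℂ) * ((n : ℂ) - i) := by
    have := congrArg (fun m : ℕ => (m : ℂ)) h2n
    push_cast [Nat.cast_sub hi.le] at this
    exact this
  linear_combination h2 - (k + n) * h1

end RCaux
namespace RCaux

lemma coeff_step (n i : ℕ) (hi : i ≤ n) (k X : ℂ) :
    (n.choose (i+1) : ℂ) * Pc k (i+1) n * X^(n-(i+1)) * (k + n + (i+1)) * X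
      + (n.choose i : ℂ) * Pc k i n * X^(n-i)
    = ((n+1).choose (i+1) : ℂ) * Pc k (i+1) (n+1) * X^(n-i) := by
  rcases Nat.lt_or_ge i n with hlt | hge
  · have hX : X^(n-(i+1)) * X = X^(n-i) := by
      rw [← pow_succ]
      congr 1
      omega
    have hPc1 : Pc k i n = (k + i) * Pc k (i+1) n := Pc_bot k hlt
    have hPc2 : Pc k (i+1) (n+1) = Pc k (i+1) n * (k + n) := Pc_top k hlt
    have hkey := choose_key n i hlt k
    calc (n.choose (i+1) : ℂ) * Pc k (i+1) n * X^(n-(i+1)) * (k + n + (i+1)) * X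
          + (n.choose i : ℂ) * Pc k i n * X^(n-i)
        = ((n.choose (i+1) : ℂ) * (k + n + i + 1) + (n.choose i : ℂ) * (k + i))
            * Pc k (i+1) n * X^(n-i) := by
          rw [hPc1]
          rw [show (n.choose (i+1) : ℂ) * Pc k (i+1) n * X^(n-(i+1)) * (k + n + (i+1)) * X
              = (n.choose (i+1) : ℂ) * Pc k (i+1) n * (k + n + (i+1)) * (X^(n-(i+1)) * X) by ring,
            hX]
          push_cast
          ring
      _ = ((n+1).choose (i+1) : ℂ) * Pc k (i+1) (n+1) * X^(n-i) := by
          rw [hkey, hPc2]; ring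
  · have hin : i = n := le_antisymm hi hge
    subst hin
    simp [Nat.choose_succ_self, Pc_self, Nat.sub_self]

lemma sum_step (n : ℕ) (k X u : ℂ) (F : ℕ → ℂ) :
    ∑ s ∈ Finset.range (n+1), ((n.choose s : ℂ) * Pc k s n * X^(n-s)) *
      ((k + n + s) * X * u^(n+1+s) * F s + u^(n+1+(s+1)) * F (s+1))
    = ∑ s ∈ Finset.range (n+2), ((n+1).choose s : ℂ) * Pc k s (n+1) * X^(n+1-s) * u^(n+1+s) * F s := by
  have hsplit : ∀ s, ((n.choose s : ℂ) * Pc k s n * X^(n-s)) *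
      ((k + n + s) * X * u^(n+1+s) * F s + u^(n+1+(s+1)) * F (s+1))
      = ((n.choose s : ℂ) * Pc k s n * X^(n-s)) * ((k + n + s) * X * u^(n+1+s) * F s)
        + ((n.choose s : ℂ) * Pc k s n * X^(n-s)) * (u^(n+1+(s+1)) * F (s+1)) := fun s => by ring
  rw [Finset.sum_congr rfl (fun s _ => hsplit s), Finset.sum_add_distrib]
  rw [Finset.sum_range_succ' (fun s => ((n+1).choose s : ℂ) * Pc k s (n+1) * X^(n+1-s) * u^(n+1+s) * F s) (n+1)]
  rw [Finset.sum_range_succ' (fun s => ((n.choose s : ℂ) * Pc k s n * X^(n-s)) * ((k + n + s) * X * u^(n+1+s) * F s)) n]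
  have hlast : ∀ i ∈ Finset.range (n+1),
      ((n+1).choose (i+1) : ℂ) * Pc k (i+1) (n+1) * X^(n+1-(i+1)) * u^(n+1+(i+1)) * F (i+1)
      = ((n.choose (i+1) : ℂ) * Pc k (i+1) n * X^(n-(i+1))) * ((k + n + (i+1)) * X * u^(n+1+(i+1)) * F (i+1))
        + ((n.choose i : ℂ) * Pc k i n * X^(n-i)) * (u^(n+1+(i+1)) * F (i+1)) := by
    intro i hi
    have hi' : i ≤ n := Nat.lt_succ_iff.1 (Finset.mem_range.1 hi)
    have := coeff_step n i hi' k X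
    have hexp : n+1-(i+1) = n-i := by omega
    rw [hexp]
    calc ((n+1).choose (i+1) : ℂ) * Pc k (i+1) (n+1) * X^(n-i) * u^(n+1+(i+1)) * F (i+1)
        = (((n+1).choose (i+1) : ℂ) * Pc k (i+1) (n+1) * X^(n-i)) * (u^(n+1+(i+1)) * F (i+1)) := by ring
      _ = ((n.choose (i+1) : ℂ) * Pc k (i+1) n * X^(n-(i+1)) * (k + n + (i+1)) * X
            + (n.choose i : ℂ) * Pc k i n * X^(n-i)) * (u^(n+1+(i+1)) * F (i+1)) := by rw [this]
      _ = _ := by push_cast; ring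
  rw [Finset.sum_congr rfl hlast, Finset.sum_add_distrib]
  rw [Finset.sum_range_succ (fun i => ((n.choose (i+1) : ℂ) * Pc k (i+1) n * X^(n-(i+1))) * ((k + n + (i+1)) * X * u^(n+1+(i+1)) * F (i+1))) n]
  simp only [Nat.choose_succ_self, Nat.cast_zero, Nat.choose_zero_right, Nat.cast_one]
  rw [Pc_top k (Nat.zero_le n)]
  simp only [Nat.sub_zero]
  rw [pow_succ X n]
  push_cast
  ring
end RCaux
namespace RCaux

noncomputable def Xc (γ : SL2Z) : ℂ := -(γ 1 0 : ℂ) / (2 * (Real.pi : ℂ) * Complex.I)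

lemma c_eq (γ : SL2Z) : ((γ 1 0 : ℤ) : ℂ) = -((2 * (Real.pi : ℂ) * Complex.I) * Xc γ) := by
  rw [Xc, mul_div_cancel₀ _ two_pi_I_ne_zero']
  ring

lemma hasDerivAt_inv_pow (γ : SL2Z) (m : ℕ) {z : ℂ} (hz : z ∈ UpperHalf) :
    HasDerivAt (fun z => ((denom γ z)⁻¹)^m)
      (-(m : ℂ) * (γ 1 0 : ℂ) * ((denom γ z)⁻¹)^(m+1)) z := by
  have hj : denom γ z ≠ 0 := denom_ne_zero γ hz
  have h := ((hasDerivAt_denom γ z).inv hj).pow m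
  refine h.congr_deriv (Eq.symm ?_)
  simp only [Pi.inv_apply]
  match m with
  | 0 => norm_num
  | Nat.succ m' =>
    rw [Nat.succ_sub_one]
    push_cast
    rw [div_eq_mul_inv, ← inv_pow, Nat.succ_eq_add_one]
    ring

lemma hasDerivAt_term (k : ℝ) {f : ℂ → ℂ} (hf : DifferentiableOn ℂ f UpperHalf) (γ : SL2Z)
    (n s : ℕ) {z : ℂ} (hz : z ∈ UpperHalf) :
    HasDerivAt (fun z => denom γ z ^ (-(k:ℂ)) * (((denom γ z)⁻¹)^(n+s) * DIter s f (moebius γ z)))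
      ((2 * (Real.pi : ℂ) * Complex.I) * (denom γ z ^ (-(k:ℂ)) *
        (((k:ℂ) + n + s) * Xc γ * ((denom γ z)⁻¹)^(n+1+s) * DIter s f (moebius γ z)
          + ((denom γ z)⁻¹)^(n+1+(s+1)) * DIter (s+1) f (moebius γ z)))) z := by
  have hj : denom γ z ≠ 0 := denom_ne_zero γ hz
  have hw : moebius γ z ∈ UpperHalf := moebius_mem γ hz
  have hA : HasDerivAt (fun z => denom γ z ^ (-(k:ℂ)))
      ((-(k:ℂ)) * denom γ z ^ (-(k:ℂ) - 1) * (γ 1 0 : ℂ)) z := hasDerivAt_denom_cpow γ _ hz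
  have hB := hasDerivAt_inv_pow γ (n + s) hz
  have hfa : DifferentiableAt ℂ (DIter s f) (moebius γ z) :=
    (analytic_DIter hf s _ hw).differentiableAt
  have hC : HasDerivAt (fun z => DIter s f (moebius γ z))
      (deriv (DIter s f) (moebius γ z) * ((denom γ z)⁻¹ ^ 2)) z :=
    (hfa.hasDerivAt).comp z (hasDerivAt_moebius γ hz)
  have h := hA.mul (hB.mul hC)
  refine h.congr_deriv (Eq.symm ?_)
  simp only [Pi.mul_apply]
  rw [deriv_DIter_eq]
  have hcpow : denom γ z ^ (-(k:ℂ) - 1) = denom γ z ^ (-(k:ℂ)) * (denom γ z)⁻¹ := by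
    rw [Complex.cpow_sub _ _ hj, Complex.cpow_one, div_eq_mul_inv]
  rw [hcpow, c_eq γ]
  push_cast
  ring

end RCaux
namespace RCaux

lemma lemA (k : ℝ) {f : ℂ → ℂ} (hf : DifferentiableOn ℂ f UpperHalf) (γ : SL2Z) (n : ℕ) :
    ∀ z ∈ UpperHalf, DIter n (slash k γ f) z
      = ∑ s ∈ Finset.range (n+1),
          ((n.choose s : ℂ) * Pc (k:ℂ) s n * (Xc γ)^(n-s)) *
            (denom γ z ^ (-(k:ℂ)) * (((denom γ z)⁻¹)^(n+s) * DIter s f (moebius γ z))) := by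
  induction n with
  | zero =>
    intro z hz
    simp [DIter, slash, Pc]
  | succ n ih =>
    intro z hz
    have hD : DIter (n+1) (slash k γ f) z
        = (1 / (2 * (Real.pi:ℂ) * Complex.I)) * deriv (DIter n (slash k γ f)) z := by
      rw [DIter_succ]; rfl
    have hEE : DIter n (slash k γ f) =ᶠ[nhds z]
        (fun z => ∑ s ∈ Finset.range (n+1),
          ((n.choose s : ℂ) * Pc (k:ℂ) s n * (Xc γ)^(n-s)) *
            (denom γ z ^ (-(k:ℂ)) * (((denom γ z)⁻¹)^(n+s) * DIter s f (moebius γ z)))) :=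
      Filter.eventuallyEq_of_mem (isOpen_UH.mem_nhds hz) ih
    have hG : HasDerivAt (fun z => ∑ s ∈ Finset.range (n+1),
          ((n.choose s : ℂ) * Pc (k:ℂ) s n * (Xc γ)^(n-s)) *
            (denom γ z ^ (-(k:ℂ)) * (((denom γ z)⁻¹)^(n+s) * DIter s f (moebius γ z))))
        (∑ s ∈ Finset.range (n+1),
          ((n.choose s : ℂ) * Pc (k:ℂ) s n * (Xc γ)^(n-s)) *
            ((2 * (Real.pi : ℂ) * Complex.I) * (denom γ z ^ (-(k:ℂ)) *
              (((k:ℂ) + n + s) * Xc γ * ((denom γ z)⁻¹)^(n+1+s) * DIter s f (moebius γ z)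
                + ((denom γ z)⁻¹)^(n+1+(s+1)) * DIter (s+1) f (moebius γ z))))) z := by
      apply HasDerivAt.fun_sum
      intro s _
      exact (hasDerivAt_term k hf γ n s hz).const_mul _
    rw [hD, hEE.deriv_eq, hG.deriv]
    have hstep := sum_step n (k : ℂ) (Xc γ) ((denom γ z)⁻¹) (fun s => DIter s f (moebius γ z))
    calc (1 / (2 * (Real.pi:ℂ) * Complex.I)) * ∑ s ∈ Finset.range (n+1),
          ((n.choose s : ℂ) * Pc (k:ℂ) s n * (Xc γ)^(n-s)) *
            ((2 * (Real.pi : ℂ) * Complex.I) * (denom γ z ^ (-(k:ℂ)) *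
              (((k:ℂ) + n + s) * Xc γ * ((denom γ z)⁻¹)^(n+1+s) * DIter s f (moebius γ z)
                + ((denom γ z)⁻¹)^(n+1+(s+1)) * DIter (s+1) f (moebius γ z))))
        = denom γ z ^ (-(k:ℂ)) * ∑ s ∈ Finset.range (n+1),
            ((n.choose s : ℂ) * Pc (k:ℂ) s n * (Xc γ)^(n-s)) *
              (((k:ℂ) + n + s) * Xc γ * ((denom γ z)⁻¹)^(n+1+s) * DIter s f (moebius γ z)
                + ((denom γ z)⁻¹)^(n+1+(s+1)) * DIter (s+1) f (moebius γ z)) := by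
          rw [Finset.mul_sum, Finset.mul_sum]
          apply Finset.sum_congr rfl
          intro s _
          have h2pi := two_pi_I_ne_zero'
          field_simp
      _ = denom γ z ^ (-(k:ℂ)) * ∑ s ∈ Finset.range (n+2),
            ((n+1).choose s : ℂ) * Pc (k:ℂ) s (n+1) * (Xc γ)^(n+1-s) * ((denom γ z)⁻¹)^(n+1+s)
              * DIter s f (moebius γ z) := by
          congr 1
      _ = ∑ s ∈ Finset.range (n+1+1),
          (((n+1).choose s : ℂ) * Pc (k:ℂ) s (n+1) * (Xc γ)^(n+1-s)) *
            (denom γ z ^ (-(k:ℂ)) * (((denom γ z)⁻¹)^(n+1+s) * DIter s f (moebius γ z))) := by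
          rw [Finset.mul_sum]
          apply Finset.sum_congr rfl
          intro s _
          ring

end RCaux
namespace RCaux

lemma alt_sum_C (n : ℕ) :
    ∑ i ∈ Finset.range (n+1), (-1:ℂ)^i * (n.choose i : ℂ) = if n = 0 then 1 else 0 := by
  have h := @Int.alternating_sum_range_choose n
  have h2 := congrArg (fun x : ℤ => (x : ℂ)) h
  push_cast at h2
  simpa [apply_ite] using h2

lemma step2 (N t i : ℕ) (hi : i ≤ N) :
    N.choose i * (N - i).choose t = N.choose t * (N - t).choose i := by
  rcases le_or_gt (i + t) N with h | h
  · have e1 : N.choose i = N.choose (N - i) := (Nat.choose_symm hi).symm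
    have e2 := Nat.choose_mul (n := N) (show t ≤ N - i by omega)
    have e3 : N - i - t = N - t - i := by omega
    have e4 : (N - t).choose (N - t - i) = (N - t).choose i :=
      Nat.choose_symm (by omega)
    rw [e1, e2, e3, e4]
  · have z1 : (N - i).choose t = 0 := Nat.choose_eq_zero_of_lt (by omega)
    rw [z1, mul_zero]
    rcases le_or_gt t N with ht | ht
    · have z2 : (N - t).choose i = 0 := Nat.choose_eq_zero_of_lt (by omega)
      rw [z2, mul_zero]
    · have z3 : N.choose t = 0 := Nat.choose_eq_zero_of_lt ht
      rw [z3, zero_mul]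

lemma shrink_alt (N t : ℕ) :
    ∑ i ∈ Finset.range (N+1), (-1:ℂ)^i * ((N-t).choose i : ℂ)
      = if N - t = 0 then 1 else 0 := by
  have hsub : ∑ i ∈ Finset.range (N+1), (-1:ℂ)^i * ((N-t).choose i : ℂ)
      = ∑ i ∈ Finset.range ((N-t)+1), (-1:ℂ)^i * ((N-t).choose i : ℂ) := by
    symm
    apply Finset.sum_subset
    · intro x hx
      simp only [Finset.mem_range] at *
      omega
    · intro x _ hx
      simp only [Finset.mem_range, not_lt] at hx
      simp [Nat.choose_eq_zero_of_lt (by omega : N - t < x)]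
  rw [hsub, alt_sum_C]

lemma binom_sum (ν s t : ℕ) (hs : s ≤ ν) :
    ∑ r ∈ Finset.range (ν+1),
        (-1:ℂ)^(ν-r) * (ν.choose r : ℂ) * (r.choose s : ℂ) * ((ν-r).choose t : ℂ)
      = if s + t = ν then (-1:ℂ)^t * (ν.choose s : ℂ) else 0 := by
  set N := ν - s with hN
  have hsub : ∑ r ∈ Finset.range (ν+1),
        (-1:ℂ)^(ν-r) * (ν.choose r : ℂ) * (r.choose s : ℂ) * ((ν-r).choose t : ℂ)
      = ∑ r ∈ Finset.Ico s (ν+1),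
        (-1:ℂ)^(ν-r) * (ν.choose r : ℂ) * (r.choose s : ℂ) * ((ν-r).choose t : ℂ) := by
    rw [Finset.range_eq_Ico]
    symm
    apply Finset.sum_subset
    · exact Finset.Ico_subset_Ico (Nat.zero_le s) le_rfl
    · intro r hr hnot
      simp only [Finset.mem_Ico] at hr hnot
      have : r < s := by omega
      simp [Nat.choose_eq_zero_of_lt this]
  rw [hsub, Finset.sum_Ico_eq_sum_range]
  have hrange : ν + 1 - s = N + 1 := by omega
  rw [hrange]
  have hterm : ∀ i ∈ Finset.range (N+1),
      (-1:ℂ)^(ν-(s+i)) * (ν.choose (s+i) : ℂ) * ((s+i).choose s : ℂ) * ((ν-(s+i)).choose t : ℂ)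
      = ((ν.choose s : ℂ) * (N.choose t : ℂ) * (-1:ℂ)^N) * ((-1:ℂ)^i * ((N-t).choose i : ℂ)) := by
    intro i hi
    have hiN : i ≤ N := by
      simp only [Finset.mem_range] at hi; omega
    have h1n : ν.choose (s+i) * (s+i).choose s = ν.choose s * N.choose i := by
      have := Nat.choose_mul (n := ν) (show s ≤ s + i by omega)
      simpa [hN] using this
    have h1 : (ν.choose (s+i) : ℂ) * ((s+i).choose s : ℂ) = (ν.choose s : ℂ) * (N.choose i : ℂ) := by
      exact_mod_cast h1n
    have h2 : ν - (s+i) = N - i := by omega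
    have h3 : (N.choose i : ℂ) * ((N-i).choose t : ℂ) = (N.choose t : ℂ) * ((N-t).choose i : ℂ) := by
      exact_mod_cast step2 N t i hiN
    have h4 : (-1:ℂ)^(N-i) = (-1:ℂ)^N * (-1:ℂ)^i := by
      have hsq : ((-1:ℂ)^i) * ((-1:ℂ)^i) = 1 := by
        rw [← pow_add]
        simp [pow_mul, show i + i = 2 * i by omega, pow_mul]
      calc (-1:ℂ)^(N-i) = (-1:ℂ)^(N-i) * (((-1:ℂ)^i) * ((-1:ℂ)^i)) := by rw [hsq, mul_one]
        _ = ((-1:ℂ)^(N-i) * (-1:ℂ)^i) * (-1:ℂ)^i := by ring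
        _ = (-1:ℂ)^N * (-1:ℂ)^i := by rw [← pow_add, show N - i + i = N by omega]
    rw [h2, h4]
    calc ((-1:ℂ)^N * (-1:ℂ)^i) * (ν.choose (s+i) : ℂ) * ((s+i).choose s : ℂ) * ((N-i).choose t : ℂ)
        = ((-1:ℂ)^N * (-1:ℂ)^i) * ((ν.choose (s+i) : ℂ) * ((s+i).choose s : ℂ)) * ((N-i).choose t : ℂ) := by ring
      _ = ((-1:ℂ)^N * (-1:ℂ)^i) * ((ν.choose s : ℂ) * ((N.choose i : ℂ) * ((N-i).choose t : ℂ))) := by rw [h1]; ring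
      _ = ((-1:ℂ)^N * (-1:ℂ)^i) * ((ν.choose s : ℂ) * ((N.choose t : ℂ) * ((N-t).choose i : ℂ))) := by rw [h3]
      _ = _ := by ring
  rw [Finset.sum_congr rfl hterm, ← Finset.mul_sum, shrink_alt]
  by_cases hcase : s + t = ν
  · have hNt : N = t := by omega
    subst hNt
    simp [hcase, Nat.choose_self]
    ring
  · rw [if_neg hcase]
    by_cases h0 : N - t = 0
    · have htN : N < t := by omega
      simp [Nat.choose_eq_zero_of_lt htN]
    · simp [h0]
end RCaux
namespace RCaux

lemma lemB (ν : ℕ) (K L X u : ℂ) (F G : ℕ → ℂ) :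
    (∑ r ∈ Finset.range (ν+1), ((-1:ℂ)^(ν-r) * (ν.choose r : ℂ) * (Pc K r ν * Pc L (ν-r) ν)) *
      ((∑ s ∈ Finset.range (r+1), ((r.choose s : ℂ) * Pc K s r * X^(r-s)) * (u^(r+s) * F s)) *
       (∑ t ∈ Finset.range (ν-r+1), (((ν-r).choose t : ℂ) * Pc L t (ν-r) * X^(ν-r-t)) * (u^(ν-r+t) * G t))))
    = ∑ s ∈ Finset.range (ν+1), ((-1:ℂ)^(ν-s) * (ν.choose s : ℂ) * (Pc K s ν * Pc L (ν-s) ν))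
        * (u^(2*ν) * (F s * G (ν-s))) := by
  calc (∑ r ∈ Finset.range (ν+1), ((-1:ℂ)^(ν-r) * (ν.choose r : ℂ) * (Pc K r ν * Pc L (ν-r) ν)) *
      ((∑ s ∈ Finset.range (r+1), ((r.choose s : ℂ) * Pc K s r * X^(r-s)) * (u^(r+s) * F s)) *
       (∑ t ∈ Finset.range (ν-r+1), (((ν-r).choose t : ℂ) * Pc L t (ν-r) * X^(ν-r-t)) * (u^(ν-r+t) * G t))))
      = ∑ r ∈ Finset.range (ν+1), ∑ s ∈ Finset.range (ν+1), ∑ t ∈ Finset.range (ν+1),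
          ((-1:ℂ)^(ν-r) * (ν.choose r : ℂ) * (r.choose s : ℂ) * ((ν-r).choose t : ℂ)) *
            (Pc K r ν * Pc L (ν-r) ν * Pc K s r * Pc L t (ν-r)
              * (X^(r-s) * X^(ν-r-t)) * (u^(r+s) * u^(ν-r+t)) * (F s * G t)) := by
        apply Finset.sum_congr rfl
        intro r hr
        have hrν : r ≤ ν := by simp only [Finset.mem_range] at hr; omega
        have e1 : (∑ s ∈ Finset.range (r+1), ((r.choose s : ℂ) * Pc K s r * X^(r-s)) * (u^(r+s) * F s))
            = ∑ s ∈ Finset.range (ν+1), ((r.choose s : ℂ) * Pc K s r * X^(r-s)) * (u^(r+s) * F s) := by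
          apply Finset.sum_subset
          · intro x hx; simp only [Finset.mem_range] at *; omega
          · intro x _ hx
            simp only [Finset.mem_range, not_lt] at hx
            simp [Nat.choose_eq_zero_of_lt (show r < x by omega)]
        have e2 : (∑ t ∈ Finset.range (ν-r+1), (((ν-r).choose t : ℂ) * Pc L t (ν-r) * X^(ν-r-t)) * (u^(ν-r+t) * G t))
            = ∑ t ∈ Finset.range (ν+1), (((ν-r).choose t : ℂ) * Pc L t (ν-r) * X^(ν-r-t)) * (u^(ν-r+t) * G t) := by
          apply Finset.sum_subset
          · intro x hx; simp only [Finset.mem_range] at *; omega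
          · intro x _ hx
            simp only [Finset.mem_range, not_lt] at hx
            simp [Nat.choose_eq_zero_of_lt (show ν - r < x by omega)]
        rw [e1, e2, Finset.sum_mul_sum, Finset.mul_sum]
        apply Finset.sum_congr rfl
        intro s _
        rw [Finset.mul_sum]
        apply Finset.sum_congr rfl
        intro t _
        ring
    _ = ∑ s ∈ Finset.range (ν+1), ∑ t ∈ Finset.range (ν+1), ∑ r ∈ Finset.range (ν+1),
          ((-1:ℂ)^(ν-r) * (ν.choose r : ℂ) * (r.choose s : ℂ) * ((ν-r).choose t : ℂ)) *
            (Pc K r ν * Pc L (ν-r) ν * Pc K s r * Pc L t (ν-r)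
              * (X^(r-s) * X^(ν-r-t)) * (u^(r+s) * u^(ν-r+t)) * (F s * G t)) := by
        rw [Finset.sum_comm]
        apply Finset.sum_congr rfl
        intro s _
        rw [Finset.sum_comm]
    _ = ∑ s ∈ Finset.range (ν+1), ∑ t ∈ Finset.range (ν+1),
          (if s + t = ν then (-1:ℂ)^t * (ν.choose s : ℂ) else 0)
            * (Pc K s ν * Pc L t ν * X^(ν-s-t) * u^(ν+s+t) * (F s * G t)) := by
        apply Finset.sum_congr rfl
        intro s hs
        apply Finset.sum_congr rfl
        intro t ht
        have hsν : s ≤ ν := by simp only [Finset.mem_range] at hs; omega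
        have htν : t ≤ ν := by simp only [Finset.mem_range] at ht; omega
        have hterm : ∀ r ∈ Finset.range (ν+1),
            ((-1:ℂ)^(ν-r) * (ν.choose r : ℂ) * (r.choose s : ℂ) * ((ν-r).choose t : ℂ)) *
              (Pc K r ν * Pc L (ν-r) ν * Pc K s r * Pc L t (ν-r)
                * (X^(r-s) * X^(ν-r-t)) * (u^(r+s) * u^(ν-r+t)) * (F s * G t))
            = ((-1:ℂ)^(ν-r) * (ν.choose r : ℂ) * (r.choose s : ℂ) * ((ν-r).choose t : ℂ)) *
              (Pc K s ν * Pc L t ν * X^(ν-s-t) * u^(ν+s+t) * (F s * G t)) := by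
          intro r hr
          have hrν : r ≤ ν := by simp only [Finset.mem_range] at hr; omega
          by_cases hsr : s ≤ r
          · by_cases htr : t ≤ ν - r
            · have hx : X^(r-s) * X^(ν-r-t) = X^(ν-s-t) := by
                rw [← pow_add]; congr 1; omega
              have hu : u^(r+s) * u^(ν-r+t) = u^(ν+s+t) := by
                rw [← pow_add]; congr 1; omega
              have p1 : Pc K s r * Pc K r ν = Pc K s ν := Pc_mul K hsr hrν
              have p2 : Pc L t (ν-r) * Pc L (ν-r) ν = Pc L t ν := Pc_mul L htr (Nat.sub_le ν r)
              rw [hx, hu, ← p1, ← p2]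
              ring
            · simp [Nat.choose_eq_zero_of_lt (show ν - r < t by omega)]
          · simp [Nat.choose_eq_zero_of_lt (show r < s by omega)]
        rw [Finset.sum_congr rfl hterm, ← Finset.sum_mul, binom_sum ν s t hsν]
    _ = ∑ s ∈ Finset.range (ν+1), ((-1:ℂ)^(ν-s) * (ν.choose s : ℂ) * (Pc K s ν * Pc L (ν-s) ν))
        * (u^(2*ν) * (F s * G (ν-s))) := by
        apply Finset.sum_congr rfl
        intro s hs
        have hsν : s ≤ ν := by simp only [Finset.mem_range] at hs; omega
        have hcond : ∀ t, (s + t = ν) = (t = ν - s) := fun t => propext (by omega)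
        simp only [hcond, ite_mul, zero_mul]
        rw [Finset.sum_ite_eq' (Finset.range (ν+1)) (ν - s)
          (fun t => (-1:ℂ)^t * (ν.choose s : ℂ) * (Pc K s ν * Pc L t ν * X^(ν-s-t) * u^(ν+s+t) * (F s * G t)))]
        rw [if_pos (by simp only [Finset.mem_range]; omega)]
        have h0 : ν - s - (ν - s) = 0 := by omega
        have h2 : ν + s + (ν - s) = 2 * ν := by omega
        rw [h0, h2, pow_zero]
        ring
end RCaux
open RCaux in
/-- cocycle property of the Rankin–Cohen bracket under the slash action. -/
theorem rankinCohen_cocycle (k l : ℝ) (ν : ℕ) (f g : ℂ → ℂ)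
    (hf : DifferentiableOn ℂ f UpperHalf) (hg : DifferentiableOn ℂ g UpperHalf)
    (γ : SL2Z) :
    ∀ z ∈ UpperHalf,
      RC k l ν (slash k γ f) (slash l γ g) z
        = slash (k + l + 2 * ν) γ (RC k l ν f g) z := by
  intro z hz
  by_cases hk : Real.Gamma (k + ν) = 0
  · simp [RC, slash, hk]
  by_cases hl : Real.Gamma (l + ν) = 0
  · simp [RC, slash, hl]
  have hj : denom γ z ≠ 0 := denom_ne_zero γ hz
  have key := lemB ν (k:ℂ) (l:ℂ) (Xc γ) ((denom γ z)⁻¹)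
    (fun s => DIter s f (moebius γ z)) (fun t => DIter t g (moebius γ z))
  have hlemA_f : ∀ r : ℕ, DIter r (slash k γ f) z
      = denom γ z ^ (-(k:ℂ)) * ∑ s ∈ Finset.range (r+1),
          ((r.choose s : ℂ) * Pc (k:ℂ) s r * (Xc γ)^(r-s)) *
            (((denom γ z)⁻¹)^(r+s) * DIter s f (moebius γ z)) := by
    intro r
    rw [lemA k hf γ r z hz, Finset.mul_sum]
    exact Finset.sum_congr rfl fun s _ => by ring
  have hlemA_g : ∀ r : ℕ, DIter r (slash l γ g) z
      = denom γ z ^ (-(l:ℂ)) * ∑ s ∈ Finset.range (r+1),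
          ((r.choose s : ℂ) * Pc (l:ℂ) s r * (Xc γ)^(r-s)) *
            (((denom γ z)⁻¹)^(r+s) * DIter s g (moebius γ z)) := by
    intro r
    rw [lemA l hg γ r z hz, Finset.mul_sum]
    exact Finset.sum_congr rfl fun s _ => by ring
  have hcpow_split : denom γ z ^ (-(((k + l + 2 * (ν:ℝ)) : ℝ) : ℂ))
      = denom γ z ^ (-(k:ℂ)) * denom γ z ^ (-(l:ℂ)) * ((denom γ z)⁻¹)^(2*ν) := by
    rw [show (-(((k + l + 2 * (ν:ℝ)) : ℝ) : ℂ))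
        = (-(k:ℂ)) + ((-(l:ℂ)) + (-((2*ν : ℕ) : ℂ))) by push_cast; ring]
    have hnat : denom γ z ^ (-((2*ν : ℕ) : ℂ)) = ((denom γ z)⁻¹)^(2*ν) := by
      rw [Complex.cpow_neg, Complex.cpow_natCast, inv_pow]
    rw [Complex.cpow_add _ _ hj, Complex.cpow_add _ _ hj, hnat]
    ring
  calc RC k l ν (slash k γ f) (slash l γ g) z
      = ∑ r ∈ Finset.range (ν+1), (denom γ z ^ (-(k:ℂ)) * denom γ z ^ (-(l:ℂ))) *
          (((-1:ℂ)^(ν-r) * (ν.choose r : ℂ) * (Pc (k:ℂ) r ν * Pc (l:ℂ) (ν-r) ν)) *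
            ((∑ s ∈ Finset.range (r+1), ((r.choose s : ℂ) * Pc (k:ℂ) s r * (Xc γ)^(r-s)) *
                (((denom γ z)⁻¹)^(r+s) * DIter s f (moebius γ z))) *
             (∑ t ∈ Finset.range (ν-r+1), (((ν-r).choose t : ℂ) * Pc (l:ℂ) t (ν-r) * (Xc γ)^(ν-r-t)) *
                (((denom γ z)⁻¹)^(ν-r+t) * DIter t g (moebius γ z))))) := by
        rw [RC]
        apply Finset.sum_congr rfl
        intro r hr
        have hrν : r ≤ ν := by simp only [Finset.mem_range] at hr; omega
        rw [hlemA_f r, hlemA_g (ν-r), coeff_eq k l hrν hk hl]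
        ring
    _ = (denom γ z ^ (-(k:ℂ)) * denom γ z ^ (-(l:ℂ))) *
          ∑ r ∈ Finset.range (ν+1),
          (((-1:ℂ)^(ν-r) * (ν.choose r : ℂ) * (Pc (k:ℂ) r ν * Pc (l:ℂ) (ν-r) ν)) *
            ((∑ s ∈ Finset.range (r+1), ((r.choose s : ℂ) * Pc (k:ℂ) s r * (Xc γ)^(r-s)) *
                (((denom γ z)⁻¹)^(r+s) * DIter s f (moebius γ z))) *
             (∑ t ∈ Finset.range (ν-r+1), (((ν-r).choose t : ℂ) * Pc (l:ℂ) t (ν-r) * (Xc γ)^(ν-r-t)) *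
                (((denom γ z)⁻¹)^(ν-r+t) * DIter t g (moebius γ z))))) := by
        rw [Finset.mul_sum]
    _ = (denom γ z ^ (-(k:ℂ)) * denom γ z ^ (-(l:ℂ))) *
          ∑ s ∈ Finset.range (ν+1),
            ((-1:ℂ)^(ν-s) * (ν.choose s : ℂ) * (Pc (k:ℂ) s ν * Pc (l:ℂ) (ν-s) ν))
              * (((denom γ z)⁻¹)^(2*ν) * (DIter s f (moebius γ z) * DIter (ν-s) g (moebius γ z))) := by
        rw [key]
    _ = slash (k + l + 2 * ν) γ (RC k l ν f g) z := by
        rw [slash, RC, hcpow_split, Finset.mul_sum, Finset.mul_sum]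
        apply Finset.sum_congr rfl
        intro s hs
        have hsν : s ≤ ν := by simp only [Finset.mem_range] at hs; omega
        rw [coeff_eq k l hsν hk hl]
        ring
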